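/- Let λ1, λ2, f > 0, 0 < θ0 < π/2, h > 0, q = 2πn₀/h for a fixed positive integer n₀, and suppose d + 2λ2q⁴cos⁴θ0 < 0. Define F₂(δρ) = ∫₀^h [ (d/2)δρ² + (f/4)δρ⁴ + λ1(δρ'' + q²δρ)² + λ2(q²δρ·cos²θ0)² ] dz. Then for δρ_ε(z) = ε sin(qz) one has F₂(δρ_ε) = (d + 2λ2q⁴cos⁴θ0)ε²h/4 + 3fε⁴h/32, which is strictly negative for every 0 < ε < √(−8(d + 2λ2q⁴cos⁴θ0)/(3f)). Consequently F₂ takes values strictly below F₂(0) = 0, so any global minimizer δρ* of F₂ over the h-periodic W^{2,2} functions is not identically zero; in particular the helical smectic state (θ ≡ 0, δρ* ≢ 0) exists as a weak solution of the Euler–Lagrange equations of the 1D reduced energy. -/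

import Mathlib

noncomputable section

open MeasureTheory Filter Topology

/-- The 1D reduced energy `F(θ, δρ)` on `[0, h]`:
`∫₀ʰ [k₁θ_z² − k₂²σ²cos²θ/(k₂cos²θ + k₃sin²θ) + (d/2)δρ² + (f/4)δρ⁴
  + λ₁(δρ_zz + q²δρ)² + λ₂(sin²θ·δρ_zz + q²δρcos²θ₀)²] dz`. -/
def F1D (k1 k2 k3 σ d f lam1 lam2 q θ0 h : ℝ) (th ρ : ℝ → ℝ) : ℝ :=
  ∫ z in (0:ℝ)..h,
    (k1 * (deriv th z) ^ 2
      - k2 ^ 2 * σ ^ 2 * Real.cos (th z) ^ 2 /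
          (k2 * Real.cos (th z) ^ 2 + k3 * Real.sin (th z) ^ 2)
      + d / 2 * ρ z ^ 2 + f / 4 * ρ z ^ 4
      + lam1 * (deriv (deriv ρ) z + q ^ 2 * ρ z) ^ 2
      + lam2 * (Real.sin (th z) ^ 2 * deriv (deriv ρ) z
          + q ^ 2 * ρ z * Real.cos θ0 ^ 2) ^ 2)

/-- Membership in `W^{1,2}(0,h)` (encoded via pointwise derivatives). -/
def MemW12I (h : ℝ) (g : ℝ → ℝ) : Prop :=
  MemLp g 2 (volume.restrict (Set.Ioo 0 h)) ∧
    MemLp (deriv g) 2 (volume.restrict (Set.Ioo 0 h))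

/-- `h`-periodic membership in `W^{2,2}`: `g(0) = g(h)`, `g'(0) = g'(h)`,
`g''(0) = g''(h)`, with `g, g', g'' ∈ L²(0,h)`. -/
def PerW22 (h : ℝ) (g : ℝ → ℝ) : Prop :=
  MemLp g 2 (volume.restrict (Set.Ioo 0 h)) ∧
    MemLp (deriv g) 2 (volume.restrict (Set.Ioo 0 h)) ∧
    MemLp (deriv (deriv g)) 2 (volume.restrict (Set.Ioo 0 h)) ∧
    g 0 = g h ∧ deriv g 0 = deriv g h ∧ deriv (deriv g) 0 = deriv (deriv g) h

/-- The restriction `F₂` of the 1D reduced energy to `θ ≡ 0`: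
`F₂(δρ) = ∫₀ʰ [(d/2)δρ² + (f/4)δρ⁴ + λ₁(δρ'' + q²δρ)² + λ₂(q²δρcos²θ₀)²] dz`. -/
def F2fun (d f lam1 lam2 q θ0 h : ℝ) (ρ : ℝ → ℝ) : ℝ :=
  ∫ z in (0:ℝ)..h,
    (d / 2 * ρ z ^ 2 + f / 4 * ρ z ^ 4
      + lam1 * (deriv (deriv ρ) z + q ^ 2 * ρ z) ^ 2
      + lam2 * (q ^ 2 * ρ z * Real.cos θ0 ^ 2) ^ 2)

/- ## Auxiliary lemmas -/

lemma sinq_hasDerivAt (ε q z : ℝ) :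
    HasDerivAt (fun z : ℝ => ε * Real.sin (q*z)) (ε * (Real.cos (q*z) * q)) z := by
  have h1 : HasDerivAt (fun z : ℝ => q * z) q z := by simpa using (hasDerivAt_id z).const_mul q
  exact ((Real.hasDerivAt_sin (q*z)).comp z h1).const_mul ε

lemma cosq_hasDerivAt (c q z : ℝ) :
    HasDerivAt (fun z : ℝ => c * Real.cos (q*z)) (c * (-Real.sin (q*z) * q)) z := by
  have h1 : HasDerivAt (fun z : ℝ => q * z) q z := by simpa using (hasDerivAt_id z).const_mul q
  exact ((Real.hasDerivAt_cos (q*z)).comp z h1).const_mul c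

lemma deriv_sinq (ε q : ℝ) :
    deriv (fun z : ℝ => ε * Real.sin (q*z)) = fun z => (ε * q) * Real.cos (q*z) := by
  funext z
  rw [(sinq_hasDerivAt ε q z).deriv]; ring

lemma deriv2_sinq (ε q : ℝ) :
    deriv (deriv (fun z : ℝ => ε * Real.sin (q*z))) = fun z => -(ε * q^2) * Real.sin (q*z) := by
  rw [deriv_sinq]
  funext z
  rw [(cosq_hasDerivAt (ε*q) q z).deriv]; ring

lemma int_sin_sq (q h : ℝ) (hq0 : q ≠ 0) (hs : Real.sin (q*h) = 0) :
    (∫ z in (0:ℝ)..h, Real.sin (q*z)^2) = h / 2 := by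
  rw [intervalIntegral.integral_comp_mul_left (fun u => Real.sin u ^ 2) hq0]
  rw [integral_sin_sq]
  simp [hs]
  field_simp

lemma int_sin_four (q h : ℝ) (hq0 : q ≠ 0) (hs : Real.sin (q*h) = 0) :
    (∫ z in (0:ℝ)..h, Real.sin (q*z)^4) = 3 * h / 8 := by
  rw [intervalIntegral.integral_comp_mul_left (fun u => Real.sin u ^ 4) hq0]
  have h4 : (4:ℕ) = 2 + 2 := rfl
  have := integral_sin_pow 2 (a := q*0) (b := q*h)
  rw [integral_sin_sq] at this
  rw [h4, this]
  simp [hs]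
  field_simp
  ring

lemma F2_value (d f lam1 lam2 q θ0 h ε : ℝ) (hq0 : q ≠ 0) (hs : Real.sin (q*h) = 0) :
    F2fun d f lam1 lam2 q θ0 h (fun z => ε * Real.sin (q * z)) =
      (d + 2 * lam2 * q ^ 4 * Real.cos θ0 ^ 4) * ε ^ 2 * h / 4 + 3 * f * ε ^ 4 * h / 32 := by
  have key : F2fun d f lam1 lam2 q θ0 h (fun z => ε * Real.sin (q * z)) =
      ∫ z in (0:ℝ)..h, ((d / 2 * ε^2 + lam2 * q^4 * Real.cos θ0 ^ 4 * ε^2) * Real.sin (q*z)^2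
        + (f / 4 * ε^4) * Real.sin (q*z)^4) := by
    unfold F2fun
    apply intervalIntegral.integral_congr
    intro z _
    simp only [deriv2_sinq ε q]
    ring
  have hI1 : IntervalIntegrable
      (fun z => (d / 2 * ε^2 + lam2 * q^4 * Real.cos θ0 ^ 4 * ε^2) * Real.sin (q*z)^2)
      volume 0 h := (Continuous.intervalIntegrable (by fun_prop) _ _)
  have hI2 : IntervalIntegrable (fun z => (f / 4 * ε^4) * Real.sin (q*z)^4)
      volume 0 h := (Continuous.intervalIntegrable (by fun_prop) _ _)
  rw [key, intervalIntegral.integral_add hI1 hI2, intervalIntegral.integral_const_mul,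
    intervalIntegral.integral_const_mul, int_sin_sq q h hq0 hs, int_sin_four q h hq0 hs]
  ring

lemma memL2_of_bdd {h : ℝ} (hh : 0 < h) {g : ℝ → ℝ} (hg : Continuous g) (C : ℝ)
    (hb : ∀ x, |g x| ≤ C) : MemLp g 2 (volume.restrict (Set.Ioo 0 h)) := by
  haveI : IsFiniteMeasure (volume.restrict (Set.Ioo (0:ℝ) h)) := by
    constructor
    rw [Measure.restrict_apply_univ]
    simp [Real.volume_Ioo]
  exact MemLp.of_bound hg.aestronglyMeasurable C
    (Eventually.of_forall (by simpa [Real.norm_eq_abs] using hb))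

/-- Let `λ₁, λ₂, f > 0`, `0 < θ₀ < π/2`, `h > 0`, `q = 2πn₀/h`, and
`d + 2λ₂q⁴cos⁴θ₀ < 0`.  Then `F₂(ε sin(q·)) = (d + 2λ₂q⁴cos⁴θ₀)ε²h/4 + 3fε⁴h/32`, which
is strictly negative for `0 < ε < √(−8(d + 2λ₂q⁴cos⁴θ₀)/(3f))`; consequently `F₂` takes
values strictly below `F₂(0) = 0`, so any global minimizer of `F₂` over the `h`-periodic
`W^{2,2}` functions is not identically zero (the helical smectic state `(θ ≡ 0, δρ ≢ 0)`
exists). -/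
theorem stmt_16 (d f lam1 lam2 q θ0 h : ℝ) (n0 : ℕ)
    (hl1 : 0 < lam1) (hl2 : 0 < lam2) (hf : 0 < f)
    (hθ0 : 0 < θ0) (hθ0' : θ0 < Real.pi / 2)
    (hh : 0 < h) (hn0 : 0 < n0) (hq : q = 2 * Real.pi * n0 / h)
    (hneg : d + 2 * lam2 * q ^ 4 * Real.cos θ0 ^ 4 < 0) :
    -- the value of `F₂` at `δρ_ε(z) = ε sin(qz)`:
    (∀ ε : ℝ, F2fun d f lam1 lam2 q θ0 h (fun z => ε * Real.sin (q * z)) =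
      (d + 2 * lam2 * q ^ 4 * Real.cos θ0 ^ 4) * ε ^ 2 * h / 4 + 3 * f * ε ^ 4 * h / 32) ∧
    -- strict negativity for small `ε > 0`:
    (∀ ε : ℝ, 0 < ε →
      ε < Real.sqrt (-(8 * (d + 2 * lam2 * q ^ 4 * Real.cos θ0 ^ 4)) / (3 * f)) →
      F2fun d f lam1 lam2 q θ0 h (fun z => ε * Real.sin (q * z)) < 0) ∧
    -- any global minimizer over the `h`-periodic `W^{2,2}` class is not identically zero:
    (∀ ρstar : ℝ → ℝ, PerW22 h ρstar →
      (∀ ρ : ℝ → ℝ, PerW22 h ρ → F2fun d f lam1 lam2 q θ0 h ρstar ≤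
        F2fun d f lam1 lam2 q θ0 h ρ) →
      ¬ Set.EqOn ρstar 0 (Set.Icc 0 h)) := by
  have hπ := Real.pi_pos
  have hq0 : (0:ℝ) < q := by
    rw [hq]
    have : (0:ℝ) < (n0:ℝ) := by exact_mod_cast hn0
    positivity
  have hqh : q * h = (n0:ℝ) * (2 * Real.pi) := by
    rw [hq]; field_simp
  have hs : Real.sin (q*h) = 0 := by
    rw [hqh]
    have : (n0:ℝ) * (2 * Real.pi) = ((2*n0 : ℕ) : ℝ) * Real.pi := by push_cast; ring
    rw [this, Real.sin_nat_mul_pi]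
  have hc : Real.cos (q*h) = 1 := by rw [hqh, Real.cos_nat_mul_two_pi]
  set A := d + 2 * lam2 * q ^ 4 * Real.cos θ0 ^ 4 with hA
  have hval : ∀ ε : ℝ, F2fun d f lam1 lam2 q θ0 h (fun z => ε * Real.sin (q * z)) =
      A * ε ^ 2 * h / 4 + 3 * f * ε ^ 4 * h / 32 :=
    fun ε => F2_value d f lam1 lam2 q θ0 h ε hq0.ne' hs
  have hneg2 : ∀ ε : ℝ, 0 < ε → ε < Real.sqrt (-(8 * A) / (3 * f)) →
      F2fun d f lam1 lam2 q θ0 h (fun z => ε * Real.sin (q * z)) < 0 := by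
    intro ε hε hεlt
    rw [hval ε]
    have hε2 : ε ^ 2 < -(8 * A) / (3 * f) := (Real.lt_sqrt hε.le).mp hεlt
    have h3f : (0:ℝ) < 3 * f := by linarith
    have hlt : 3 * f * ε ^ 2 < -(8 * A) := by
      have := (lt_div_iff₀ h3f).mp hε2
      linarith
    have hfac : A * ε ^ 2 * h / 4 + 3 * f * ε ^ 4 * h / 32
        = (ε ^ 2 * h / 32) * (8 * A + 3 * f * ε ^ 2) := by ring
    rw [hfac]
    apply mul_neg_of_pos_of_neg
    · positivity
    · linarith
  refine ⟨hval, hneg2, ?_⟩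
  intro ρstar hρstar hmin heq
  -- choose a small ε
  have hXpos : (0:ℝ) < Real.sqrt (-(8 * A) / (3 * f)) := by
    apply Real.sqrt_pos.mpr
    apply div_pos (by linarith) (by linarith)
  set ε := Real.sqrt (-(8 * A) / (3 * f)) / 2 with hε
  have hε0 : 0 < ε := by positivity
  have hεlt : ε < Real.sqrt (-(8 * A) / (3 * f)) := by
    rw [hε]; linarith
  -- the test function is in the periodic class
  have hper : PerW22 h (fun z => ε * Real.sin (q * z)) := by
    constructor
    · exact memL2_of_bdd hh (by fun_prop) |ε| (fun x => by
        rw [abs_mul]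
        calc |ε| * |Real.sin (q*x)| ≤ |ε| * 1 := by
              exact mul_le_mul_of_nonneg_left (Real.abs_sin_le_one _) (abs_nonneg _)
          _ = |ε| := mul_one _)
    refine ⟨?_, ?_, ?_, ?_, ?_⟩
    · rw [deriv_sinq]
      exact memL2_of_bdd hh (by fun_prop) |ε * q| (fun x => by
        rw [abs_mul]
        calc |ε*q| * |Real.cos (q*x)| ≤ |ε*q| * 1 :=
              mul_le_mul_of_nonneg_left (Real.abs_cos_le_one _) (abs_nonneg _)
          _ = |ε*q| := mul_one _)
    · rw [deriv2_sinq]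
      exact memL2_of_bdd hh (by fun_prop) |(-(ε * q^2))| (fun x => by
        rw [abs_mul]
        calc |(-(ε*q^2))| * |Real.sin (q*x)| ≤ |(-(ε*q^2))| * 1 :=
              mul_le_mul_of_nonneg_left (Real.abs_sin_le_one _) (abs_nonneg _)
          _ = _ := mul_one _)
    · simp [hs]
    · rw [deriv_sinq]; simp [hc]
    · rw [deriv2_sinq]; simp [hs]
  have hmin' := hmin _ hper
  have hFneg := hneg2 ε hε0 hεlt
  -- F₂(ρ*) = 0 since ρ* vanishes on [0,h]
  have hz : ∀ z ∈ Set.Ioo (0:ℝ) h, ρstar z = 0 := fun z hz' =>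
    heq (Set.Ioo_subset_Icc_self hz')
  have hd1 : ∀ z ∈ Set.Ioo (0:ℝ) h, deriv ρstar z = 0 := by
    intro z hz'
    have hev : ρstar =ᶠ[𝓝 z] (fun _ => (0:ℝ)) := by
      filter_upwards [isOpen_Ioo.mem_nhds hz'] with y hy using hz y hy
    rw [hev.deriv_eq]
    simp
  have hd2 : ∀ z ∈ Set.Ioo (0:ℝ) h, deriv (deriv ρstar) z = 0 := by
    intro z hz'
    have hev : deriv ρstar =ᶠ[𝓝 z] (fun _ => (0:ℝ)) := by
      filter_upwards [isOpen_Ioo.mem_nhds hz'] with y hy using hd1 y hy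
    rw [hev.deriv_eq]
    simp
  have hF0 : F2fun d f lam1 lam2 q θ0 h ρstar = 0 := by
    unfold F2fun
    rw [intervalIntegral.integral_of_le hh.le, MeasureTheory.integral_Ioc_eq_integral_Ioo]
    rw [MeasureTheory.setIntegral_congr_fun measurableSet_Ioo
      (g := fun _ => (0:ℝ)) (fun z hz' => by simp [hz z hz', hd2 z hz'])]
    simp
  linarith [hmin', hFneg, hF0.symm.le]
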